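/- There exist constants c, c' ∈ (0,1) depending only on the dimension d such that for every unit vector e ∈ ℝ^d there exist closed axis-parallel subcubes N⁺ and N⁻ of [−1/2, 1/2]^d, each of side length at least c, such that ∇φ(x)·e ≥ c' for all x ∈ N⁺ and ∇φ(x)·e ≤ −c' for all x ∈ N⁻. -/

import Mathlib

open MeasureTheory Real

/-- The scalar mollifier `ϕ(t) = exp(1/(64 t² − 1))` for `t < 1/8`, and `0` otherwise. -/
noncomputable def phiScalar (t : ℝ) : ℝ :=
  if t < 1 / 8 then Real.exp (1 / (64 * t ^ 2 - 1)) else 0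

/-- The point `u₊ = (1/4, …, 1/4) ∈ ℝ^d`. -/
noncomputable def uPlus (d : ℕ) : EuclideanSpace ℝ (Fin d) :=
  (EuclideanSpace.equiv (Fin d) ℝ).symm (fun _ => 1 / 4)

/-- The template function `φ(x) = ϕ(|x − u₊|) − ϕ(|x − u₋|)`, where `u₋ = −u₊`. -/
noncomputable def phiTemplate (d : ℕ) (x : EuclideanSpace ℝ (Fin d)) : ℝ :=
  phiScalar ‖x - uPlus d‖ - phiScalar ‖x - (-uPlus d)‖

/-- The closed axis-parallel cube with lower corner `a` and side length `s`. -/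
def closedCube {d : ℕ} (a : EuclideanSpace ℝ (Fin d)) (s : ℝ) : Set (EuclideanSpace ℝ (Fin d)) :=
  {x | ∀ i, x i ∈ Set.Icc (a i) (a i + s)}

lemma stmt3_aux_norm_le {d : ℕ} (y : EuclideanSpace ℝ (Fin d)) {c : ℝ} (hc : 0 ≤ c)
    (h : ∀ i, |y i| ≤ c) : ‖y‖ ≤ Real.sqrt d * c := by
  rw [EuclideanSpace.norm_eq]
  have hsum : (∑ i, ‖y i‖ ^ 2) ≤ ∑ _i : Fin d, c ^ 2 :=
    Finset.sum_le_sum fun i _ => by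
      rw [Real.norm_eq_abs]; exact pow_le_pow_left₀ (abs_nonneg _) (h i) 2
  calc Real.sqrt (∑ i, ‖y i‖ ^ 2) ≤ Real.sqrt (d * c ^ 2) := by
        apply Real.sqrt_le_sqrt; simpa using hsum
    _ = Real.sqrt d * c := by
        rw [Real.sqrt_mul (Nat.cast_nonneg d), Real.sqrt_sq hc]

lemma stmt3_aux_norm_uPlus (d : ℕ) : ‖uPlus d‖ = Real.sqrt d / 4 := by
  rw [EuclideanSpace.norm_eq]
  have h : ∀ i : Fin d, ‖uPlus d i‖ ^ 2 = 1/16 := by intro i; norm_num [uPlus]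
  simp only [h, Finset.sum_const, Finset.card_univ, Fintype.card_fin, nsmul_eq_mul]
  rw [show (d : ℝ) * (1/16) = d / 4^2 by ring,
    Real.sqrt_div' d (by norm_num), Real.sqrt_sq (by norm_num : (0:ℝ) ≤ 4)]

lemma grad_eq (d : ℕ) (x : EuclideanSpace ℝ (Fin d))
    (h1 : ‖x - uPlus d‖ < 1/8) (h2 : 1/8 < ‖x + uPlus d‖) :
    gradient (phiTemplate d) x =
      (Real.exp ((64 * ‖x - uPlus d‖ ^ 2 - 1)⁻¹) *
        (-(64 * 1) / (64 * ‖x - uPlus d‖ ^ 2 - 1) ^ 2) * 2) • (x - uPlus d) := by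
  set u := uPlus d
  set s : ℝ := ‖x - u‖ ^ 2 with hs
  have hq_ne : 64 * s - 1 ≠ 0 := by
    have : s < (1/8)^2 := by
      rw [hs]
      exact pow_lt_pow_left₀ h1 (norm_nonneg _) (by norm_num)
    nlinarith
  have hq : HasDerivAt (fun t : ℝ => (64 * t - 1)⁻¹)
      (-(64 * 1) / (64 * s - 1) ^ 2) s :=
    (((hasDerivAt_id s).const_mul 64).sub_const 1).inv hq_ne
  have hexp : HasDerivAt (fun t : ℝ => Real.exp ((64 * t - 1)⁻¹))
      (Real.exp ((64 * s - 1)⁻¹) * (-(64 * 1) / (64 * s - 1) ^ 2)) s := hq.exp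
  have hns : HasFDerivAt (fun y : EuclideanSpace ℝ (Fin d) => ‖y - u‖ ^ 2)
      (2 • (innerSL ℝ (x - u)).comp (ContinuousLinearMap.id ℝ _)) x := by
    have := ((hasFDerivAt_id x).sub_const u).norm_sq
    simpa using this
  have hcomp : HasFDerivAt
      (fun y : EuclideanSpace ℝ (Fin d) => Real.exp ((64 * ‖y - u‖ ^ 2 - 1)⁻¹))
      ((Real.exp ((64 * s - 1)⁻¹) * (-(64 * 1) / (64 * s - 1) ^ 2)) •
        (2 • (innerSL ℝ (x - u)).comp (ContinuousLinearMap.id ℝ _))) x :=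
    hexp.comp_hasFDerivAt (f := fun y : EuclideanSpace ℝ (Fin d) => ‖y - u‖ ^ 2) x hns
  have hgrad : HasGradientAt
      (fun y : EuclideanSpace ℝ (Fin d) => Real.exp ((64 * ‖y - u‖ ^ 2 - 1)⁻¹))
      ((Real.exp ((64 * s - 1)⁻¹) * (-(64 * 1) / (64 * s - 1) ^ 2) * 2) • (x - u)) x := by
    rw [hasGradientAt_iff_hasFDerivAt]
    refine hcomp.congr_fderiv ?_
    ext y
    simp [real_inner_smul_left, inner_smul_left]
    ring
  have hopen : IsOpen {y : EuclideanSpace ℝ (Fin d) | ‖y - u‖ < 1/8 ∧ 1/8 < ‖y + u‖} := by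
    apply IsOpen.inter
    · exact isOpen_lt ((continuous_id.sub continuous_const).norm) continuous_const
    · exact isOpen_lt continuous_const ((continuous_id.add continuous_const).norm)
  have hev : phiTemplate d =ᶠ[nhds x]
      (fun y : EuclideanSpace ℝ (Fin d) => Real.exp ((64 * ‖y - u‖ ^ 2 - 1)⁻¹)) := by
    filter_upwards [hopen.mem_nhds ⟨h1, h2⟩] with y hy
    obtain ⟨hy1, hy2⟩ := hy
    unfold phiTemplate phiScalar
    rw [sub_neg_eq_add, if_pos hy1, if_neg (not_lt.2 hy2.le), one_div]
    ring
  exact (hgrad.congr_of_eventuallyEq hev).gradient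

set_option maxHeartbeats 1000000 in
lemma plus_cube (d : ℕ) (hd : 1 ≤ d) (e : EuclideanSpace ℝ (Fin d)) (he : ‖e‖ = 1) :
    ∃ (a : EuclideanSpace ℝ (Fin d)) (s : ℝ), (128 * Real.sqrt d)⁻¹ ≤ s ∧
      closedCube a s ⊆
        {x : EuclideanSpace ℝ (Fin d) | ∀ i, x i ∈ Set.Icc (-(1 / 2) : ℝ) (1 / 2)} ∧
      ∀ x ∈ closedCube a s, (1:ℝ)/2 ≤ (inner ℝ (gradient (phiTemplate d) x) e : ℝ) := by
  have hsd : 1 ≤ Real.sqrt d := by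
    rw [show (1:ℝ) = Real.sqrt 1 by simp]
    exact Real.sqrt_le_sqrt (by exact_mod_cast hd)
  have hsd0 : 0 < Real.sqrt d := lt_of_lt_of_le one_pos hsd
  set c : ℝ := (128 * Real.sqrt d)⁻¹ with hc
  have hc0 : 0 < c := by positivity
  have hcs : Real.sqrt d * c = 1/128 := by
    field_simp [hc]
    rw [hc]; field_simp
  have hcle : c ≤ 1/128 := by
    rw [← hcs]
    nlinarith
  set a : EuclideanSpace ℝ (Fin d) := uPlus d - (16:ℝ)⁻¹ • e with ha
  refine ⟨a, c, le_refl _, ?_, ?_⟩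
  · -- containment in the big cube
    intro x hx i
    have hxi := hx i
    have hai : a i = 1/4 - 16⁻¹ * e i := by simp [ha, uPlus]
    have hei : |e i| ≤ 1 := by
      rw [← he]
      rw [EuclideanSpace.norm_eq]
      have h := Finset.single_le_sum (f := fun j => ‖e j‖ ^ 2) (fun j _ => sq_nonneg _)
        (Finset.mem_univ i)
      calc |e i| = Real.sqrt (‖e i‖ ^ 2) := by
            rw [Real.sqrt_sq_eq_abs, Real.norm_eq_abs, abs_abs]
        _ ≤ _ := Real.sqrt_le_sqrt h
    rw [hai] at hxi
    obtain ⟨hl, hr⟩ := hxi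
    constructor
    · cases' abs_le.1 hei with h1 h2
      nlinarith
    · cases' abs_le.1 hei with h1 h2
      nlinarith
  · -- gradient lower bound
    intro x hx
    set u := uPlus d
    -- coordinate bounds give ‖x - a‖ ≤ 1/128
    have hxa : ‖x - a‖ ≤ 1/128 := by
      rw [← hcs]
      apply stmt3_aux_norm_le _ hc0.le
      intro i
      have := hx i
      obtain ⟨hl, hr⟩ := this
      have : (x - a) i = x i - a i := by simp
      rw [this, abs_le]
      constructor <;> linarith
    have hau : a - u = -((16:ℝ)⁻¹ • e) := by rw [ha]; abel
    have hnau : ‖a - u‖ = 1/16 := by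
      rw [hau, norm_neg, norm_smul, he]
      norm_num
    have hxu_le : ‖x - u‖ ≤ 9/128 := by
      calc ‖x - u‖ = ‖(x - a) + (a - u)‖ := by rw [sub_add_sub_cancel]
        _ ≤ ‖x - a‖ + ‖a - u‖ := norm_add_le _ _
        _ ≤ 1/128 + 1/16 := by rw [hnau]; linarith
        _ = 9/128 := by norm_num
    have hxu_ge : 7/128 ≤ ‖x - u‖ := by
      have : ‖a - u‖ - ‖x - a‖ ≤ ‖x - u‖ := by
        have h := norm_sub_norm_le (a - u) (a - x)
        have e1 : (a - u) - (a - x) = x - u := by abel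
        have e2 : ‖a - x‖ = ‖x - a‖ := norm_sub_rev _ _
        rw [e1, e2] at h
        linarith [le_abs_self (‖a - u‖ - ‖x - a‖), h]
      rw [hnau] at this
      linarith
    have hxu_lt : ‖x - u‖ < 1/8 := by linarith
    have hxpu : 1/8 < ‖x + u‖ := by
      have h2u : ‖(2:ℝ) • u‖ = Real.sqrt d / 2 := by
        rw [norm_smul, stmt3_aux_norm_uPlus]
        simp [Real.norm_eq_abs]
        ring
      have : ‖(2:ℝ) • u‖ - ‖x - u‖ ≤ ‖x + u‖ := by
        have h := norm_sub_norm_le ((2:ℝ) • u) (u - x)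
        have e1 : ((2:ℝ) • u) - (u - x) = x + u := by
          rw [two_smul]; abel
        have e2 : ‖u - x‖ = ‖x - u‖ := norm_sub_rev _ _
        rw [e1, e2] at h
        linarith [le_abs_self (‖(2:ℝ) • u‖ - ‖u - x‖)]
      rw [h2u] at this
      nlinarith
    rw [grad_eq d x hxu_lt hxpu]
    set r : ℝ := ‖x - u‖
    set q : ℝ := 64 * r ^ 2 - 1 with hqdef
    have hq1 : -1 ≤ q := by
      have : (7/128:ℝ)^2 ≤ r^2 := by
        apply pow_le_pow_left₀ (by norm_num) hxu_ge
      nlinarith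
    have hq2 : q ≤ -1/2 := by
      have : r^2 ≤ (9/128:ℝ)^2 := pow_le_pow_left₀ (norm_nonneg _) hxu_le 2
      nlinarith
    have hq0 : q < 0 := by linarith
    have hqinv : -2 ≤ q⁻¹ := by
      rw [← one_div, le_div_iff_of_neg hq0]
      linarith
    have hexp : (1:ℝ)/8 ≤ Real.exp q⁻¹ := by
      have h1 : Real.exp (-2 : ℝ) ≤ Real.exp q⁻¹ := Real.exp_le_exp.2 hqinv
      have h2 : Real.exp (-2:ℝ) = (Real.exp 1 * Real.exp 1)⁻¹ := by
        rw [← Real.exp_add, ← Real.exp_neg]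
        norm_num
      have h3 : Real.exp 1 < 2.7182818286 := Real.exp_one_lt_d9
      have h4 : (0:ℝ) < Real.exp 1 := Real.exp_pos 1
      have h5 : Real.exp 1 * Real.exp 1 < 8 := by nlinarith
      have h6 : (1:ℝ)/8 ≤ (Real.exp 1 * Real.exp 1)⁻¹ := by
        rw [one_div, inv_le_inv₀ (by norm_num) (by positivity)]
        linarith
      linarith [h2 ▸ h6, h1]
    -- inner product computation
    rw [real_inner_smul_left]
    have hinner : (inner ℝ (x - u) e : ℝ) ≤ -(7/128) := by
      have hsplit : (inner ℝ (x - u) e : ℝ) = inner ℝ (x - a) e + inner ℝ (a - u) e := by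
        rw [← inner_add_left, sub_add_sub_cancel]
      have h1 : (inner ℝ (x - a) e : ℝ) ≤ 1/128 := by
        calc (inner ℝ (x - a) e : ℝ) ≤ ‖x - a‖ * ‖e‖ := real_inner_le_norm _ _
          _ ≤ 1/128 := by rw [he]; linarith
      have h2 : (inner ℝ (a - u) e : ℝ) = -(1/16) := by
        rw [hau, inner_neg_left, real_inner_smul_left, real_inner_self_eq_norm_sq, he]
        norm_num
      rw [hsplit, h2]
      linarith
    -- final numeric bound
    set w : ℝ := Real.exp q⁻¹
    have hq2pos : 0 < q ^ 2 :=
      lt_of_le_of_ne (sq_nonneg q) (Ne.symm (pow_ne_zero 2 (ne_of_lt hq0)))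
    have hq2le : q ^ 2 ≤ 1 := by nlinarith
    have hA : (16:ℝ) ≤ w * (64 * 1) / q ^ 2 * 2 := by
      rw [div_mul_eq_mul_div, le_div_iff₀ hq2pos]
      nlinarith [hexp, hq2le, hq2pos]
    have key : w * (-(64 * 1) / q ^ 2) * 2 * (inner ℝ (x - u) e : ℝ)
        = (w * (64 * 1) / q ^ 2 * 2) * (-(inner ℝ (x - u) e : ℝ)) := by ring
    rw [show x - uPlus d = x - u from rfl, key]
    have hn : (7/128:ℝ) ≤ -(inner ℝ (x - u) e : ℝ) := by linarith
    calc (1:ℝ)/2 ≤ 16 * (7/128) := by norm_num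
      _ ≤ (w * (64 * 1) / q ^ 2 * 2) * (-(inner ℝ (x - u) e : ℝ)) := by
          apply mul_le_mul hA hn (by norm_num) (by linarith)

/-- There exist constants `c, c' ∈ (0,1)`, depending only on `d`, such that for
every unit vector `e` there are closed axis-parallel subcubes `N⁺, N⁻` of `[−1/2, 1/2]^d` of side
length at least `c` with `∇φ · e ≥ c'` on `N⁺` and `∇φ · e ≤ −c'` on `N⁻`. -/
theorem stmt3 (d : ℕ) (hd : 1 ≤ d) :
    ∃ c c' : ℝ, 0 < c ∧ c < 1 ∧ 0 < c' ∧ c' < 1 ∧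
      ∀ e : EuclideanSpace ℝ (Fin d), ‖e‖ = 1 →
        (∃ (a : EuclideanSpace ℝ (Fin d)) (s : ℝ), c ≤ s ∧
          closedCube a s ⊆
            {x : EuclideanSpace ℝ (Fin d) | ∀ i, x i ∈ Set.Icc (-(1 / 2) : ℝ) (1 / 2)} ∧
          ∀ x ∈ closedCube a s, c' ≤ (inner ℝ (gradient (phiTemplate d) x) e : ℝ)) ∧
        (∃ (a : EuclideanSpace ℝ (Fin d)) (s : ℝ), c ≤ s ∧
          closedCube a s ⊆
            {x : EuclideanSpace ℝ (Fin d) | ∀ i, x i ∈ Set.Icc (-(1 / 2) : ℝ) (1 / 2)} ∧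
          ∀ x ∈ closedCube a s, (inner ℝ (gradient (phiTemplate d) x) e : ℝ) ≤ -c') := by
  have hsd : 1 ≤ Real.sqrt d := by
    rw [show (1:ℝ) = Real.sqrt 1 by simp]
    exact Real.sqrt_le_sqrt (by exact_mod_cast hd)
  have hsd0 : 0 < Real.sqrt d := lt_of_lt_of_le one_pos hsd
  refine ⟨(128 * Real.sqrt d)⁻¹, 1/2, by positivity, ?_, by norm_num, by norm_num, ?_⟩
  · rw [inv_lt_one_iff₀]
    right
    nlinarith
  · intro e he
    constructor
    · exact plus_cube d hd e he
    · obtain ⟨a, s, h1, h2, h3⟩ := plus_cube d hd (-e) (by rw [norm_neg, he])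
      refine ⟨a, s, h1, h2, fun x hx => ?_⟩
      have := h3 x hx
      rw [inner_neg_right] at this
      linarith
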